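/- Let l ∈ {2, 3}, k > 0 and R > 0 be fixed. Then lim_{n→∞} ∫_0^R r^{l−1} · j_n(kr)² dr = 0. -/

import Mathlib

open Real Nat Filter

/-- The spherical Bessel function of order `n`, defined by its everywhere absolutely convergent
power series `j_n(x) = Σ_{m=0}^∞ (−1)^m x^{2m+n} / (2^m · m! · (2n+2m+1)!!)`. -/
noncomputable def sphericalBesselJ (n : ℕ) (x : ℝ) : ℝ :=
  ∑' m : ℕ, (-1 : ℝ) ^ m * x ^ (2 * m + n) /
    (2 ^ m * (m.factorial : ℝ) * ((2 * n + 2 * m + 1)‼ : ℝ))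

lemma dfac_mono_aux (n m : ℕ) : (2 * n + 1)‼ ≤ (2 * n + 2 * m + 1)‼ := by
  induction m with
  | zero => simp
  | succ m ih =>
    have h : 2 * n + 2 * (m + 1) + 1 = (2 * n + 2 * m + 1) + 2 := by ring
    rw [h, Nat.doubleFactorial_add_two]
    calc (2 * n + 1)‼ ≤ (2 * n + 2 * m + 1)‼ := ih
      _ ≤ (2 * n + 2 * m + 1 + 2) * (2 * n + 2 * m + 1)‼ :=
        Nat.le_mul_of_pos_left _ (by omega)

lemma factorial_le_dfac (n : ℕ) : n ! ≤ (2 * n + 1)‼ := by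
  induction n with
  | zero => simp
  | succ n ih =>
    have h : 2 * (n + 1) + 1 = (2 * n + 1) + 2 := by ring
    rw [h, Nat.doubleFactorial_add_two, Nat.factorial_succ]
    exact Nat.mul_le_mul (by omega) ih

lemma sphericalBesselJ_abs_le (n : ℕ) (x : ℝ) :
    |sphericalBesselJ n x| ≤ |x| ^ n * Real.exp (x ^ 2 / 2) / ((2 * n + 1)‼ : ℝ) := by
  set D : ℝ := ((2 * n + 1)‼ : ℝ) with hD
  have hDpos : (0 : ℝ) < D := by rw [hD]; exact_mod_cast Nat.doubleFactorial_pos _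
  set g : ℕ → ℝ := fun m => |x| ^ n / D * ((x ^ 2 / 2) ^ m / (m ! : ℝ)) with hg
  have hsg : Summable g := (Real.summable_pow_div_factorial (x ^ 2 / 2)).mul_left _
  have hbound : ∀ m : ℕ,
      |(-1 : ℝ) ^ m * x ^ (2 * m + n) / (2 ^ m * (m.factorial : ℝ) * ((2 * n + 2 * m + 1)‼ : ℝ))|
        ≤ g m := by
    intro m
    have hd : D ≤ ((2 * n + 2 * m + 1)‼ : ℝ) := by rw [hD]; exact_mod_cast dfac_mono_aux n m
    have hdpos : (0 : ℝ) < ((2 * n + 2 * m + 1)‼ : ℝ) := by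
      exact_mod_cast Nat.doubleFactorial_pos _
    have hmf : (0 : ℝ) < (m ! : ℝ) := by exact_mod_cast m.factorial_pos
    have habs : |(-1 : ℝ) ^ m * x ^ (2 * m + n) /
        (2 ^ m * (m.factorial : ℝ) * ((2 * n + 2 * m + 1)‼ : ℝ))|
        = |x| ^ (2 * m + n) / (2 ^ m * (m ! : ℝ) * ((2 * n + 2 * m + 1)‼ : ℝ)) := by
      rw [abs_div]
      congr 1
      · rw [abs_mul, abs_pow, abs_pow, abs_neg, abs_one, one_pow, one_mul]
      · exact abs_of_pos (mul_pos (mul_pos (by positivity) hmf) hdpos)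
    rw [habs]
    have hx : |x| ^ (2 * m + n) = (x ^ 2) ^ m * |x| ^ n := by
      rw [pow_add, pow_mul, sq_abs]
    have hgm : g m = (x ^ 2) ^ m * |x| ^ n / (2 ^ m * (m ! : ℝ) * D) := by
      rw [hg]; field_simp; rw [mul_assoc, ← mul_pow, div_mul_cancel₀ _ (two_ne_zero : (2:ℝ) ≠ 0)]
    rw [hx, hgm]
    gcongr
  have hs : Summable fun m => |(-1 : ℝ) ^ m * x ^ (2 * m + n) /
      (2 ^ m * (m.factorial : ℝ) * ((2 * n + 2 * m + 1)‼ : ℝ))| :=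
    Summable.of_nonneg_of_le (fun _ => abs_nonneg _) hbound hsg
  have h1 : |sphericalBesselJ n x| ≤ ∑' m, |(-1 : ℝ) ^ m * x ^ (2 * m + n) /
      (2 ^ m * (m.factorial : ℝ) * ((2 * n + 2 * m + 1)‼ : ℝ))| := by
    rw [sphericalBesselJ]
    have h := norm_tsum_le_tsum_norm (f := fun m : ℕ => (-1 : ℝ) ^ m * x ^ (2 * m + n) /
        (2 ^ m * (m.factorial : ℝ) * ((2 * n + 2 * m + 1)‼ : ℝ)))
        (by simp only [Real.norm_eq_abs]; exact hs)
    simp only [Real.norm_eq_abs] at h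
    exact h
  have h2 := Summable.tsum_le_tsum hbound hs hsg
  have h3 : ∑' m, g m = |x| ^ n / D * Real.exp (x ^ 2 / 2) := by
    rw [hg, tsum_mul_left]
    congr 1
    rw [Real.exp_eq_exp_ℝ, NormedSpace.exp_eq_tsum_div]
  calc |sphericalBesselJ n x| ≤ ∑' m, g m := h1.trans h2
    _ = |x| ^ n * Real.exp (x ^ 2 / 2) / D := by rw [h3]; ring

/-- Let `l ∈ {2, 3}`, `k > 0` and `R > 0` be fixed.  Then
`lim_{n→∞} ∫_0^R r^{l−1} · j_n(kr)² dr = 0`. -/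
theorem tendsto_integral_sphericalBesselJ_sq (l : ℕ) (hl : l = 2 ∨ l = 3)
    (k R : ℝ) (hk : 0 < k) (hR : 0 < R) :
    Tendsto (fun n : ℕ => ∫ r in (0 : ℝ)..R, r ^ (l - 1) * sphericalBesselJ n (k * r) ^ 2)
      atTop (nhds 0) := by
  set a : ℝ := k * R with ha
  have hapos : 0 < a := mul_pos hk hR
  set E : ℝ := Real.exp (a ^ 2 / 2) with hE
  have hEpos : 0 < E := Real.exp_pos _
  set C : ℕ → ℝ := fun n => R ^ (l - 1) * (a ^ n * E / ((2 * n + 1)‼ : ℝ)) ^ 2 * R with hC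
  -- C n tends to 0
  have hdiv : Tendsto (fun n : ℕ => a ^ n / ((2 * n + 1)‼ : ℝ)) atTop (nhds 0) := by
    apply squeeze_zero (fun n => by positivity) (g := fun n : ℕ => a ^ n / (n ! : ℝ))
    · intro n
      have h1 : (n ! : ℝ) ≤ ((2 * n + 1)‼ : ℝ) := by exact_mod_cast factorial_le_dfac n
      gcongr
    · exact FloorSemiring.tendsto_pow_div_factorial_atTop a
  have hCt : Tendsto C atTop (nhds 0) := by
    have h1 : Tendsto (fun n : ℕ => (a ^ n / ((2 * n + 1)‼ : ℝ)) ^ 2) atTop (nhds 0) := by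
      have := hdiv.mul hdiv
      simpa [sq] using this
    have h2 : Tendsto (fun n : ℕ => R ^ (l - 1) * E ^ 2 * R *
        (a ^ n / ((2 * n + 1)‼ : ℝ)) ^ 2) atTop (nhds 0) := by
      simpa using h1.const_mul (R ^ (l - 1) * E ^ 2 * R)
    have heq : C = fun n : ℕ => R ^ (l - 1) * E ^ 2 * R *
        (a ^ n / ((2 * n + 1)‼ : ℝ)) ^ 2 := by
      funext n; rw [hC]; field_simp
    rw [heq]; exact h2
  -- squeeze
  apply squeeze_zero_norm _ hCt
  intro n
  have hDpos : (0 : ℝ) < ((2 * n + 1)‼ : ℝ) := by exact_mod_cast Nat.doubleFactorial_pos _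
  have key : ∀ r ∈ Set.uIoc (0 : ℝ) R,
      ‖r ^ (l - 1) * sphericalBesselJ n (k * r) ^ 2‖
        ≤ R ^ (l - 1) * (a ^ n * E / ((2 * n + 1)‼ : ℝ)) ^ 2 := by
    intro r hr
    rw [Set.uIoc_of_le hR.le] at hr
    obtain ⟨hr0, hrR⟩ := hr
    have hkr : 0 < k * r := mul_pos hk hr0
    have hkra : k * r ≤ a := by
      rw [ha]; exact mul_le_mul_of_nonneg_left hrR hk.le
    have hj : |sphericalBesselJ n (k * r)| ≤ a ^ n * E / ((2 * n + 1)‼ : ℝ) := by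
      have h0 := sphericalBesselJ_abs_le n (k * r)
      rw [abs_of_pos hkr] at h0
      refine h0.trans ?_
      have hmul : (k * r) ^ n * Real.exp ((k * r) ^ 2 / 2) ≤ a ^ n * E :=
        mul_le_mul (pow_le_pow_left₀ hkr.le hkra n)
          (Real.exp_le_exp.mpr (by nlinarith)) (Real.exp_pos _).le (by positivity)
      gcongr
    have hjsq : sphericalBesselJ n (k * r) ^ 2 ≤ (a ^ n * E / ((2 * n + 1)‼ : ℝ)) ^ 2 := by
      rw [← sq_abs]
      exact pow_le_pow_left₀ (abs_nonneg _) hj 2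
    rw [Real.norm_eq_abs, abs_of_nonneg (by positivity)]
    exact mul_le_mul (pow_le_pow_left₀ hr0.le hrR _) hjsq (by positivity) (by positivity)
  have := intervalIntegral.norm_integral_le_of_norm_le_const key
  calc ‖∫ r in (0:ℝ)..R, r ^ (l - 1) * sphericalBesselJ n (k * r) ^ 2‖
      ≤ R ^ (l - 1) * (a ^ n * E / ((2 * n + 1)‼ : ℝ)) ^ 2 * |R - 0| := this
    _ = C n := by rw [hC]; rw [abs_of_pos (by linarith : (0:ℝ) < R - 0)]; ring
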